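/- The infinite alternating group Alt(ℕ) satisfies a nontrivial mixed identity; that is, Alt(ℕ) is not MIF. -/

import Mathlib

/-- The infinite alternating group `Alt(ℕ)`: the subgroup of `Equiv.Perm ℕ` generated by all
3-cycles (equivalently, the group of finitary even permutations of `ℕ`). -/
def AltN : Subgroup (Equiv.Perm ℕ) :=
  Subgroup.closure
    {σ | ∃ x y z : ℕ, x ≠ y ∧ y ≠ z ∧ x ≠ z ∧ σ = Equiv.swap x y * Equiv.swap y z}

/-- `w ∈ G * F_n` is a mixed identity of `G`: every substitution of elements of `G` for the
free generators (via the homomorphism `G * F_n → G` that is the identity on `G`) kills `w`. -/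
def SatisfiesMixedIdentity (G : Type*) [Group G] {n : ℕ}
    (w : Monoid.Coprod G (FreeGroup (Fin n))) : Prop :=
  ∀ g : Fin n → G, Monoid.Coprod.lift (MonoidHom.id G) (FreeGroup.lift g) w = 1

/-- A group is mixed identity free (MIF) if it satisfies no nontrivial mixed identity. -/
def IsMIF (G : Type*) [Group G] : Prop :=
  ∀ (n : ℕ) (w : Monoid.Coprod G (FreeGroup (Fin n))), SatisfiesMixedIdentity G w → w = 1

/-- the 3-cycle (0 1 2) -/
def gg : Equiv.Perm ℕ := Equiv.swap 0 1 * Equiv.swap 1 2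

lemma gg_mem : gg ∈ AltN :=
  Subgroup.subset_closure ⟨0, 1, 2, by norm_num, by norm_num, by norm_num, rfl⟩

lemma gg_fix {x : ℕ} (hx : x ∉ ({0,1,2} : Finset ℕ)) : gg x = x := by
  simp only [Finset.mem_insert, Finset.mem_singleton, not_or] at hx
  obtain ⟨h0, h1, h2⟩ := hx
  simp [gg, Equiv.Perm.mul_apply, Equiv.swap_apply_of_ne_of_ne, h0, h1, h2]

lemma gg_maps {x : ℕ} (hx : x ∈ ({0,1,2} : Finset ℕ)) : gg x ∈ ({0,1,2} : Finset ℕ) := by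
  fin_cases hx <;> decide

/-- key support lemma: product of `gg` with any conjugate of `gg` has order dividing 720. -/
lemma key (a : Equiv.Perm ℕ) : (gg * (a * gg * a⁻¹)) ^ 720 = 1 := by
  set σ := gg * (a * gg * a⁻¹) with hσ
  set S : Finset ℕ := ({0,1,2} : Finset ℕ) ∪ Finset.image a ({0,1,2} : Finset ℕ) with hS
  have hfix : ∀ x ∉ S, σ x = x := by
    intro x hx
    simp only [hS, Finset.mem_union, not_or] at hx
    obtain ⟨hx1, hx2⟩ := hx
    have hinv : a⁻¹ x ∉ ({0,1,2} : Finset ℕ) := by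
      intro h
      exact hx2 (Finset.mem_image.mpr ⟨a⁻¹ x, h, by simp⟩)
    simp only [hσ, Equiv.Perm.mul_apply]
    rw [gg_fix hinv]
    simp only [Equiv.Perm.inv_def, Equiv.apply_symm_apply]
    exact gg_fix hx1
  have hmaps : ∀ x ∈ S, σ x ∈ S := by
    intro x hx
    have step1 : (a * gg * a⁻¹) x ∈ S := by
      by_cases h : a⁻¹ x ∈ ({0,1,2} : Finset ℕ)
      · simp only [Equiv.Perm.mul_apply]
        exact Finset.mem_union_right _ (Finset.mem_image.mpr ⟨gg (a⁻¹ x), gg_maps h, rfl⟩)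
      · simp only [Equiv.Perm.mul_apply]
        rw [gg_fix h]
        simpa using hx
    set y := (a * gg * a⁻¹) x with hy
    by_cases h : y ∈ ({0,1,2} : Finset ℕ)
    · have : σ x = gg y := by simp [hσ, hy, Equiv.Perm.mul_apply]
      rw [this]
      exact Finset.mem_union_left _ (gg_maps h)
    · have : σ x = gg y := by simp [hσ, hy, Equiv.Perm.mul_apply]
      rw [this, gg_fix h]
      exact step1
  have hiff : ∀ x, x ∈ S ↔ σ x ∈ S := by
    intro x
    constructor
    · exact hmaps x
    · intro h
      by_contra hx
      rw [hfix x hx] at h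
      exact hx h
  -- the restricted permutation
  set π : Equiv.Perm {x // x ∈ S} := σ.subtypePerm (fun x => (hiff x).symm) with hπ
  have hcard : S.card ≤ 6 := by
    calc S.card ≤ ({0,1,2} : Finset ℕ).card + (Finset.image a ({0,1,2} : Finset ℕ)).card :=
          Finset.card_union_le _ _
      _ ≤ 3 + 3 := by
          gcongr
          · decide
          · exact le_trans (Finset.card_image_le) (by decide)
      _ = 6 := rfl
  have hdvd : orderOf π ∣ 720 := by
    have h1 : orderOf π ∣ Fintype.card (Equiv.Perm {x // x ∈ S}) := orderOf_dvd_card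
    have h2 : Fintype.card (Equiv.Perm {x // x ∈ S}) = Nat.factorial S.card := by
      rw [Fintype.card_perm, Fintype.card_coe]
    have h3 : Nat.factorial S.card ∣ 720 := by
      have : Nat.factorial S.card ∣ Nat.factorial 6 := Nat.factorial_dvd_factorial hcard
      simpa [Nat.factorial] using this
    exact h1.trans (h2 ▸ h3)
  have hπ720 : π ^ 720 = 1 := orderOf_dvd_iff_pow_eq_one.mp hdvd
  ext x
  by_cases hx : x ∈ S
  · have := congrArg (fun p => (p ⟨x, hx⟩ : {x // x ∈ S}).val) ((Equiv.Perm.subtypePerm_pow σ 720 (fun x => (hiff x).symm)) ▸ hπ720)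
    simpa using this
  · simpa using Equiv.Perm.pow_apply_eq_self_of_apply_eq_self (hfix x hx) 720

def ggA : AltN := ⟨gg, gg_mem⟩

/-- The mixed identity word. -/
def ww : Monoid.Coprod AltN (FreeGroup (Fin 1)) :=
  (Monoid.Coprod.inl ggA * Monoid.Coprod.inr (FreeGroup.of 0) * Monoid.Coprod.inl ggA *
    (Monoid.Coprod.inr (FreeGroup.of 0))⁻¹) ^ 720

lemma ww_mixed : SatisfiesMixedIdentity AltN ww := by
  intro f
  simp only [ww, map_pow, map_mul, map_inv, Monoid.Coprod.lift_apply_inl,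
    Monoid.Coprod.lift_apply_inr, FreeGroup.lift_apply_of, MonoidHom.id_apply]
  have : (ggA * f 0 * ggA * (f 0)⁻¹) ^ 720 = 1 := by
    apply Subtype.ext
    push_cast
    have : (gg * (f 0 : Equiv.Perm ℕ) * gg * ((f 0 : Equiv.Perm ℕ))⁻¹) ^ 720 = 1 := by
      have := key ((f 0 : Equiv.Perm ℕ))
      rw [show gg * ((f 0 : Equiv.Perm ℕ) * gg * ((f 0 : Equiv.Perm ℕ))⁻¹)
            = gg * (f 0 : Equiv.Perm ℕ) * gg * ((f 0 : Equiv.Perm ℕ))⁻¹ by group] at this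
      exact this
    exact this
  rw [this]

/-- diagonal embedding of `Perm ℕ` in `Perm (ℕ × Bool)` -/
def dbl : Equiv.Perm ℕ →* Equiv.Perm (ℕ × Bool) where
  toFun σ := Equiv.prodCongr σ (Equiv.refl Bool)
  map_one' := by ext ⟨n, b⟩ <;> simp
  map_mul' := fun σ τ => by ext ⟨n, b⟩ <;> simp [Equiv.Perm.mul_apply]

def tt : Equiv.Perm (ℕ × Bool) :=
  Equiv.swap (0, false) (0, true) * Equiv.swap (1, false) (3, false)

def PP : Equiv.Perm (ℕ × Bool) :=
  Equiv.prodCongr gg (Equiv.refl Bool) * (tt * Equiv.prodCongr gg (Equiv.refl Bool) * tt⁻¹)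

set_option maxRecDepth 4000 in
lemma PP6 : (PP ^ 6) (0, false) = (3, false) := by decide

set_option maxRecDepth 4000 in
lemma PP7 : (PP ^ 7) (3, false) = (3, false) := by decide

lemma PP_pow_ne : (PP ^ 720) (0, false) ≠ (0, false) := by
  have : (PP ^ 720) (0, false) = (3, false) := by
    have h720 : PP ^ 720 = (PP ^ 7) ^ 102 * PP ^ 6 := by
      rw [← pow_mul, ← pow_add]
    rw [h720, Equiv.Perm.mul_apply, PP6]
    exact Equiv.Perm.pow_apply_eq_self_of_apply_eq_self PP7 102
  rw [this]
  decide

lemma ww_ne : ww ≠ 1 := by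
  intro h
  have hψ := congrArg
    (Monoid.Coprod.lift (dbl.comp AltN.subtype) (FreeGroup.lift (fun _ : Fin 1 => tt))) h
  simp only [ww, map_pow, map_mul, map_inv, map_one, Monoid.Coprod.lift_apply_inl,
    Monoid.Coprod.lift_apply_inr, FreeGroup.lift_apply_of, MonoidHom.comp_apply] at hψ
  have hform : dbl (AltN.subtype ggA) * tt * dbl (AltN.subtype ggA) * tt⁻¹
      = PP := by
    show Equiv.prodCongr gg (Equiv.refl Bool) * tt * Equiv.prodCongr gg (Equiv.refl Bool) * tt⁻¹
      = PP
    simp [PP, mul_assoc]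
  rw [hform] at hψ
  exact PP_pow_ne (by rw [hψ]; rfl)

/-- `Alt(ℕ)` satisfies a nontrivial mixed identity; that is, `Alt(ℕ)` is not MIF. -/
theorem altN_not_mif :
    (∃ (n : ℕ) (w : Monoid.Coprod AltN (FreeGroup (Fin n))),
      w ≠ 1 ∧ SatisfiesMixedIdentity AltN w) ∧ ¬ IsMIF AltN := by
  refine ⟨⟨1, ww, ww_ne, ww_mixed⟩, fun hmif => ww_ne (hmif 1 ww ww_mixed)⟩
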